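/- (Kruskal's theorem, labelled version) If (Q, ≤) is a well quasi-order, then the set T(Q) of finite ordered trees with labels in Q is a well quasi-order under the tree-embeddability relation ⪯. -/

import Mathlib

universe u

/-- Finite ordered trees with labels in `Q`. -/
inductive LTree (Q : Type u) : Type u
  | node : Q → List (LTree Q) → LTree Q

mutual
  /-- Tree embeddability: `Emb r t s` iff `t` embeds into a subtree of `s`, or the
  roots compare via `r` and the lists of immediate subtrees compare in Higman's
  order induced by embeddability. -/
  inductive Emb {Q : Type u} (r : Q → Q → Prop) : LTree Q → LTree Q → Prop
    | subtree {t s : LTree Q} {q : Q} {ss : List (LTree Q)} :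
        Emb r t s → s ∈ ss → Emb r t (.node q ss)
    | node {p q : Q} {ts ss : List (LTree Q)} :
        r p q → ListEmb r ts ss → Emb r (.node p ts) (.node q ss)

  /-- Higman's embedding between lists of trees, with `Emb r` on the elements. -/
  inductive ListEmb {Q : Type u} (r : Q → Q → Prop) : List (LTree Q) → List (LTree Q) → Prop
    | nil : ListEmb r [] []
    | cons {t s : LTree Q} {ts ss : List (LTree Q)} :
        Emb r t s → ListEmb r ts ss → ListEmb r (t :: ts) (s :: ss)
    | skip {s : LTree Q} {ts ss : List (LTree Q)} :
        ListEmb r ts ss → ListEmb r ts (s :: ss)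
end

def IsWqo {α : Type*} (r : α → α → Prop) : Prop :=
  ∀ f : ℕ → α, ∃ i j : ℕ, i < j ∧ r (f i) (f j)

section Aux

variable {Q : Type u} {r : Q → Q → Prop}

theorem listEmb_nil_left : ∀ l : List (LTree Q), ListEmb r [] l
  | [] => .nil
  | _ :: l => .skip (listEmb_nil_left l)

theorem listEmb_mem {ts ss : List (LTree Q)} (h : ListEmb r ts ss) :
    ∀ t ∈ ts, ∃ s ∈ ss, Emb r t s := by
  induction ss generalizing ts with
  | nil => cases h; intro t ht; cases ht
  | cons s ss ih =>
    cases h with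
    | cons h1 h2 =>
      intro t ht
      rcases List.mem_cons.1 ht with rfl | ht
      · exact ⟨_, List.mem_cons_self, h1⟩
      · obtain ⟨s', hs, hts⟩ := ih h2 t ht
        exact ⟨s', List.mem_cons_of_mem _ hs, hts⟩
    | skip h2 =>
      intro t ht
      obtain ⟨s', hs, hts⟩ := ih h2 t ht
      exact ⟨s', List.mem_cons_of_mem _ hs, hts⟩

theorem emb_refl_aux (hrefl : Reflexive r) : ∀ n : ℕ,
    (∀ t : LTree Q, sizeOf t ≤ n → Emb r t t) ∧
    (∀ l : List (LTree Q), sizeOf l ≤ n → ListEmb r l l) := by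
  intro n
  induction n using Nat.strong_induction_on with
  | _ n IH =>
    constructor
    · rintro ⟨q, ts⟩ hle
      have hts : sizeOf ts < n := by
        have : sizeOf ts < sizeOf (LTree.node q ts) := by simp only [LTree.node.sizeOf_spec, List.cons.sizeOf_spec]; omega
        omega
      exact Emb.node (hrefl q) ((IH _ hts).2 ts le_rfl)
    · intro l hle
      match l with
      | [] => exact .nil
      | t :: l' =>
        have h1 : sizeOf t < n := by
          have : sizeOf t < sizeOf (t :: l') := by simp only [LTree.node.sizeOf_spec, List.cons.sizeOf_spec]; omega
          omega
        have h2 : sizeOf l' < n := by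
          have : sizeOf l' < sizeOf (t :: l') := by simp only [LTree.node.sizeOf_spec, List.cons.sizeOf_spec]; omega
          omega
        exact .cons ((IH _ h1).1 t le_rfl) ((IH _ h2).2 l' le_rfl)

theorem emb_trans_aux (htrans : Transitive r) : ∀ n : ℕ,
    (∀ u : LTree Q, sizeOf u ≤ n → ∀ t s, Emb r t s → Emb r s u → Emb r t u) ∧
    (∀ ss' : List (LTree Q), sizeOf ss' ≤ n →
      ∀ ts ss, ListEmb r ts ss → ListEmb r ss ss' → ListEmb r ts ss') := by
  intro n
  induction n using Nat.strong_induction_on with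
  | _ n IH =>
    constructor
    · intro u hu t s h1 h2
      cases h2 with
      | subtree h2' hmem =>
        rename_i s' q ss
        have hs' : sizeOf s' < n := by
          have h3 := List.sizeOf_lt_of_mem hmem
          have : sizeOf ss < sizeOf (LTree.node q ss) := by simp only [LTree.node.sizeOf_spec, List.cons.sizeOf_spec]; omega
          omega
        exact Emb.subtree ((IH _ hs').1 s' le_rfl t s h1 h2') hmem
      | node hr hl =>
        rename_i p q ss ss'
        -- s = node p ss, u = node q ss'
        cases h1 with
        | subtree h1' hmem =>
          obtain ⟨s₁, hs₁, hts₁⟩ := listEmb_mem hl _ hmem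
          have hsz : sizeOf s₁ < n := by
            have h3 := List.sizeOf_lt_of_mem hs₁
            have : sizeOf ss' < sizeOf (LTree.node q ss') := by simp only [LTree.node.sizeOf_spec, List.cons.sizeOf_spec]; omega
            omega
          exact Emb.subtree ((IH _ hsz).1 s₁ le_rfl t _ h1' hts₁) hs₁
        | node hr' hl' =>
          rename_i p' ts'
          have hsz : sizeOf ss' < n := by
            have : sizeOf ss' < sizeOf (LTree.node q ss') := by simp only [LTree.node.sizeOf_spec, List.cons.sizeOf_spec]; omega
            omega
          exact Emb.node (htrans hr' hr) ((IH _ hsz).2 ss' le_rfl _ _ hl' hl)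
    · intro ss' hss' ts ss h1 h2
      cases h2 with
      | nil => cases h1; exact .nil
      | cons hss h2' =>
        rename_i s s' ss₀ ss₀'
        have hsz : sizeOf s' < n := by
          have : sizeOf s' < sizeOf (s' :: ss₀') := by simp only [LTree.node.sizeOf_spec, List.cons.sizeOf_spec]; omega
          omega
        have hsz2 : sizeOf ss₀' < n := by
          have : sizeOf ss₀' < sizeOf (s' :: ss₀') := by simp only [LTree.node.sizeOf_spec, List.cons.sizeOf_spec]; omega
          omega
        cases h1 with
        | cons ht hts =>
          exact .cons ((IH _ hsz).1 s' le_rfl _ _ ht hss)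
            ((IH _ hsz2).2 ss₀' le_rfl _ _ hts h2')
        | skip hts =>
          exact .skip ((IH _ hsz2).2 ss₀' le_rfl _ _ hts h2')
      | skip h2' =>
        rename_i s' ss₀'
        have hsz2 : sizeOf ss₀' < n := by
          have : sizeOf ss₀' < sizeOf (s' :: ss₀') := by simp only [LTree.node.sizeOf_spec, List.cons.sizeOf_spec]; omega
          omega
        exact .skip ((IH _ hsz2).2 ss₀' le_rfl _ _ h1 h2')

theorem emb_refl (hrefl : Reflexive r) : Reflexive (Emb r) :=
  fun t => (emb_refl_aux hrefl (sizeOf t)).1 t le_rfl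

theorem emb_trans (htrans : Transitive r) : Transitive (Emb r) :=
  fun _t _s u h1 h2 => (emb_trans_aux htrans (sizeOf u)).1 u le_rfl _ _ h1 h2

theorem sublistForall₂_listEmb {ts ss : List (LTree Q)}
    (h : List.SublistForall₂ (Emb r) ts ss) : ListEmb r ts ss := by
  induction h with
  | nil => exact listEmb_nil_left _
  | cons h1 _ ih => exact .cons h1 ih
  | cons_right _ ih => exact .skip ih

/-- root label -/
def LTree.root : LTree Q → Q
  | .node q _ => q

/-- children -/
def LTree.children : LTree Q → List (LTree Q)
  | .node _ ts => ts

theorem LTree.node_root_children : ∀ t : LTree Q, t = .node t.root t.children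
  | .node _ _ => rfl

end Aux

theorem children_sizeOf_lt {Q : Type u} {t u : LTree Q} (hu : u ∈ t.children) :
    sizeOf u < sizeOf t := by
  obtain ⟨q, ts⟩ := t
  have h1 := List.sizeOf_lt_of_mem hu
  have : sizeOf ts < sizeOf (LTree.node q ts) := by
    simp only [LTree.node.sizeOf_spec]; omega
  simp only [LTree.children] at h1
  omega


/-- Kruskal's theorem, labelled version: if (Q, ≤) is a wqo, then the
finite ordered trees with labels in Q form a wqo under tree embeddability. -/
theorem kruskal_labelled {Q : Type u} (r : Q → Q → Prop)
    (hrefl : Reflexive r) (htrans : Transitive r)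
    (hwqo : IsWqo r) :
    IsWqo (Emb r) := by
  classical
  haveI : IsRefl Q r := ⟨hrefl⟩
  haveI : IsTrans Q r := ⟨fun _ _ _ h1 h2 => htrans h1 h2⟩
  haveI : IsRefl (LTree Q) (Emb r) := ⟨emb_refl hrefl⟩
  haveI : IsTrans (LTree Q) (Emb r) := ⟨fun _ _ _ h1 h2 => emb_trans htrans h1 h2⟩
  suffices h : (Set.univ : Set (LTree Q)).PartiallyWellOrderedOn (Emb r) by
    intro f
    exact Set.partiallyWellOrderedOn_iff_exists_lt.1 h f fun _ => Set.mem_univ _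
  rw [Set.PartiallyWellOrderedOn.iff_not_exists_isMinBadSeq (fun t : LTree Q => sizeOf t)]
  rintro ⟨f, hf, hmin⟩
  -- the set of all children of trees in the minimal bad sequence
  set S : Set (LTree Q) := {t | ∃ n, t ∈ (f n).children} with hSdef
  -- embedding into a tree of the sequence via a child
  have hsub : ∀ {x u : LTree Q} {n : ℕ}, Emb r x u → u ∈ (f n).children → Emb r x (f n) := by
    intro x u n hx hu
    rw [LTree.node_root_children (f n)]
    exact Emb.subtree hx hu
  -- S is partially well ordered
  have hSpwo : S.PartiallyWellOrderedOn (Emb r) := by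
    by_contra hc
    rw [Set.partiallyWellOrderedOn_iff_exists_lt] at hc
    push_neg at hc
    obtain ⟨g, hgS, hgbad⟩ := hc
    have hidx : ∀ k, ∃ n, g k ∈ (f n).children := hgS
    choose idx hidxspec using hidx
    set N : ℕ := sInf (Set.range idx) with hNdef
    obtain ⟨k₀, hk₀⟩ : ∃ k₀, idx k₀ = N := Nat.sInf_mem (Set.range_nonempty idx)
    have hle : ∀ k, N ≤ idx k := fun k => Nat.sInf_le ⟨k, rfl⟩
    set h' : ℕ → LTree Q := fun i => if i < N then f i else g (k₀ + (i - N)) with hh'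
    have hh'N : h' N = g k₀ := by simp [hh']
    have hbad : Set.PartiallyWellOrderedOn.IsBadSeq (Emb r) Set.univ h' := by
      refine ⟨fun _ => Set.mem_univ _, fun i j hij hemb => ?_⟩
      by_cases hj : j < N
      · have hi : i < N := hij.trans hj
        rw [hh'] at hemb
        simp only [if_pos hi, if_pos hj] at hemb
        exact hf.2 i j hij hemb
      · by_cases hi : i < N
        · rw [hh'] at hemb
          simp only [if_pos hi, if_neg hj] at hemb
          have h1 : Emb r (f i) (f (idx (k₀ + (j - N)))) := hsub hemb (hidxspec _)
          exact hf.2 i _ (lt_of_lt_of_le hi (hle _)) h1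
        · rw [hh'] at hemb
          simp only [if_neg hi, if_neg hj] at hemb
          refine hgbad (k₀ + (i - N)) (k₀ + (j - N)) ?_ hemb
          omega
    have hsz : sizeOf (h' N) < sizeOf (f N) := by
      rw [hh'N]
      have : g k₀ ∈ (f N).children := hk₀ ▸ hidxspec k₀
      exact children_sizeOf_lt this
    exact hmin N h' (fun m hm => by simp [hh', hm]) hsz hbad
  -- Higman's lemma on lists of children
  haveI : IsPreorder (LTree Q) (Emb r) := {}
  haveI : IsPreorder Q r := {}
  have hH := Set.partiallyWellOrderedOn_iff_exists_lt.1 (Set.PartiallyWellOrderedOn.partiallyWellOrderedOn_sublistForall₂ (Emb r) hSpwo)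
  have hQ : (Set.univ : Set Q).PartiallyWellOrderedOn r := Set.partiallyWellOrderedOn_iff_exists_lt.2 fun q _ => hwqo q
  obtain ⟨φ, hφ⟩ := hQ.exists_monotone_subseq (f := fun n => (f n).root) fun _ => Set.mem_univ _
  obtain ⟨m, n, hmn, hsl⟩ := hH (fun k => (f (φ k)).children) (fun k x hx => ⟨φ k, hx⟩)
  have hroot : r ((f (φ m)).root) ((f (φ n)).root) := hφ m n hmn.le
  have hemb : Emb r (f (φ m)) (f (φ n)) := by
    rw [LTree.node_root_children (f (φ m)), LTree.node_root_children (f (φ n))]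
    exact Emb.node hroot (sublistForall₂_listEmb hsl)
  exact hf.2 (φ m) (φ n) (φ.strictMono hmn) hemb
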